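/- Let I ⊆ 1:N be any block and let P denote the marginal distribution of X on A^I and P̂_n the empirical distribution obtained from an i.i.d. sample of size n from P. Then for any α > 0, the Kullback–Leibler divergence satisfies D(P̂_n ‖ P) < α·log(n)/n eventually almost surely as n → ∞; that is, with probability one there exists n₀ such that for all n ≥ n₀ the inequality holds. -/

import Mathlib

open MeasureTheory ProbabilityTheory Filter
open scoped Classical

noncomputable section

namespace MultiSeg

/-- The configuration space `A 0 × ⋯ × A (N-1)`. -/
abbrev Config {N : ℕ} (A : Fin N → Type*) : Type _ := ∀ i, A i

/-- The block of (0-based) positions `l ≤ i < r`, representing the integer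
interval `(l+1):r` in 1-based notation. -/
def block (N l r : ℕ) : Finset (Fin N) :=
  Finset.univ.filter fun i => l ≤ (i : ℕ) ∧ (i : ℕ) < r

/-- Strings over the block `I`. -/
abbrev Str {N : ℕ} (A : Fin N → Type*) (I : Finset (Fin N)) : Type _ :=
  ∀ i : {j : Fin N // j ∈ I}, A i.1

/-- The cylinder set of configurations agreeing with `b` on `I`. -/
def cyl {N : ℕ} {A : Fin N → Type*} (I : Finset (Fin N)) (b : Str A I) : Set (Config A) :=
  {x | ∀ i : {j : Fin N // j ∈ I}, x i.1 = b i}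

/-- Marginal probability of the string `b` over the block `I`. -/
def marg {N : ℕ} {A : Fin N → Type*} [∀ i, MeasurableSpace (A i)]
    (P : Measure (Config A)) (I : Finset (Fin N)) (b : Str A I) : ℝ :=
  (P (cyl I b)).toReal

/-- The cut `c` (`0 < c < N`), i.e. the half-integer point `c + 1/2` in 1-based
position notation, is a point of independence for the law `P`:
the coordinates `< c` are independent of the coordinates `≥ c`. -/
def IsIndepCut {N : ℕ} {A : Fin N → Type*} [∀ i, MeasurableSpace (A i)]
    (P : Measure (Config A)) (c : ℕ) : Prop :=
  0 < c ∧ c < N ∧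
    ∀ (b₁ : Str A (block N 0 c)) (b₂ : Str A (block N c N)),
      P (cyl (block N 0 c) b₁ ∩ cyl (block N c N) b₂)
        = P (cyl (block N 0 c) b₁) * P (cyl (block N c N) b₂)

/-- `U*`: the (finite) set of all points of independence of `P`, as cuts. -/
def indepCuts {N : ℕ} {A : Fin N → Type*} [∀ i, MeasurableSpace (A i)]
    (P : Measure (Config A)) : Finset ℕ :=
  (Finset.Ioo 0 N).filter fun c => IsIndepCut P c

/-- Empirical count `N_n(b)` of the string `b` over block `I` in the first `n` samples. -/
def count {N : ℕ} {A : Fin N → Type*} {Ω : Type*}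
    (X : ℕ → Ω → Config A) (I : Finset (Fin N)) (b : Str A I) (n : ℕ) (ω : Ω) : ℕ :=
  ((Finset.range n).filter fun k => ∀ i : {j : Fin N // j ∈ I}, X k ω i.1 = b i).card

/-- `Q_n(I) = Σ_b N_n(b) log (N_n(b)/n)` (the convention `0 · log 0 = 0` is automatic
since `Real.log 0 = 0`). -/
def Q {N : ℕ} {A : Fin N → Type*} [∀ i, Fintype (A i)] {Ω : Type*}
    (X : ℕ → Ω → Config A) (I : Finset (Fin N)) (n : ℕ) (ω : Ω) : ℝ :=
  ∑ b : Str A I, (count X I b n ω : ℝ) * Real.log ((count X I b n ω : ℝ) / n)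

/-- The blocks `B(U)` induced by the set of cuts `C` on positions `0,…,M-1`:
pairs `(l, r)` of consecutive elements of `C ∪ {0, M}`. -/
def blocksOf (M : ℕ) (C : Finset ℕ) : Finset (ℕ × ℕ) :=
  ((insert 0 (insert M C)) ×ˢ (insert 0 (insert M C))).filter
    fun p => p.1 < p.2 ∧ ∀ c ∈ C, ¬ (p.1 < c ∧ c < p.2)

/-- Penalized log-likelihood `ℓ̂_n(U) - pen(U,n)` of the segmentation given by cuts `C`. -/
def score {N : ℕ} {A : Fin N → Type*} [∀ i, Fintype (A i)] {Ω : Type*}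
    (X : ℕ → Ω → Config A) (ppen : ℕ → ℕ → ℝ) (n : ℕ) (ω : Ω) (C : Finset ℕ) : ℝ :=
  ∑ p ∈ blocksOf N C, (Q X (block N p.1 p.2) n ω - ppen p.1 p.2 * Real.log n)

/-- `Q̃_n(l:r) = Q_n(l:r) - p(l:r) log n`, with the convention `Q̃_n(∅) = 0`. -/
def Qt {N : ℕ} {A : Fin N → Type*} [∀ i, Fintype (A i)] {Ω : Type*}
    (X : ℕ → Ω → Config A) (ppen : ℕ → ℕ → ℝ) (n : ℕ) (ω : Ω) (l r : ℕ) : ℝ :=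
  if l < r then Q X (block N l r) n ω - ppen l r * Real.log n else 0

/-- an element of `Ico l r` maximizing `f` (or `l` if the interval is empty). -/
def argmaxIco (f : ℕ → ℝ) (l r : ℕ) : ℕ :=
  if h : (Finset.Ico l r).Nonempty then
    (Finset.exists_max_image (Finset.Ico l r) f h).choose
  else l

/-- The hierarchical (divide and conquer) algorithm `H` applied to the block `l:r`,
driven by the penalized likelihood `q l r = Q̃_n(l:r)`:  compute the best split point
`c` of `[l, r)` (where `c = l` means "no split"); if a genuine split is best, recurse
on both halves. -/
def Hrec (q : ℕ → ℕ → ℝ) (l r : ℕ) : Finset ℕ :=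
  let c := argmaxIco (fun m => q l m + q m r) l r
  if h : l < c ∧ c < r then {c} ∪ Hrec q l c ∪ Hrec q c r else ∅
termination_by r - l
decreasing_by all_goals omega

/-- Kullback-Leibler divergence between two distributions on a finite set. -/
def KL {α : Type*} [Fintype α] (p q : α → ℝ) : ℝ :=
  ∑ a, if 0 < p a then p a * Real.log (p a / q a) else 0

/-- Restriction of a string on `I` to a sub-block `J ⊆ I`. -/
def restrict {N : ℕ} {A : Fin N → Type*} {I J : Finset (Fin N)} (h : J ⊆ I)
    (a : Str A I) : Str A J :=
  fun j => a ⟨j.1, h j.2⟩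

lemma block_subset_left {N l c r : ℕ} (h : c ≤ r) : block N l c ⊆ block N l r := by
  intro i hi
  simp only [block, Finset.mem_filter, Finset.mem_univ, true_and] at hi ⊢
  omega

lemma block_subset_right {N l c r : ℕ} (h : l ≤ c) : block N c r ⊆ block N l r := by
  intro i hi
  simp only [block, Finset.mem_filter, Finset.mem_univ, true_and] at hi ⊢
  omega

end MultiSeg

namespace MultiSeg



lemma exp_sub_one_sub_le {t : ℝ} (ht : |t| ≤ 1) : Real.exp t - 1 - t ≤ t ^ 2 := by
  have h := Real.exp_bound ht (by norm_num : 0 < 2)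
  have hsum : (∑ i ∈ Finset.range 2, t ^ i / i.factorial) = 1 + t := by
    simp [Finset.sum_range_succ]
  rw [hsum] at h
  have h2 : |Real.exp t - (1 + t)| ≤ |t| ^ 2 * (3 / 4) := by
    convert h using 2
    norm_num [Nat.factorial]
  have h3 := (abs_le.mp h2).2
  have h4 : |t| ^ 2 = t ^ 2 := sq_abs t
  nlinarith [sq_nonneg t]

lemma bernoulli_mgf_le {p t : ℝ} (hp0 : 0 ≤ p) (hp1 : p ≤ 1) (ht : |t| ≤ 1) :
    Real.exp (-(t * p)) * (1 - p + p * Real.exp t) ≤ Real.exp (t ^ 2) := by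
  have hx : Real.exp t - 1 - t ≤ t ^ 2 := exp_sub_one_sub_le ht
  have h0 : (0:ℝ) ≤ Real.exp t - 1 - t := by nlinarith [Real.add_one_le_exp t]
  have h1 : 1 - p + p * Real.exp t ≤ Real.exp (p * (Real.exp t - 1)) := by
    have := Real.add_one_le_exp (p * (Real.exp t - 1)); nlinarith
  calc Real.exp (-(t * p)) * (1 - p + p * Real.exp t)
      ≤ Real.exp (-(t * p)) * Real.exp (p * (Real.exp t - 1)) :=
        mul_le_mul_of_nonneg_left h1 (Real.exp_pos _).le
    _ = Real.exp (p * (Real.exp t - 1 - t)) := by rw [← Real.exp_add]; ring_nf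
    _ ≤ Real.exp (t ^ 2) := by
        apply Real.exp_le_exp.mpr
        nlinarith

lemma chernoff_one {Ω : Type*} [MeasurableSpace Ω] {μ : Measure Ω} [IsProbabilityMeasure μ]
    (D : ℕ → Ω → ℝ) (hDmeas : ∀ k, Measurable (D k))
    (hindep : iIndepFun D μ)
    (hDb : ∀ k ω, |D k ω| ≤ 1)
    (hmgf : ∀ k t, |t| ≤ 1 → mgf (D k) μ t ≤ Real.exp (t ^ 2))
    (s : Finset ℕ) (a : ℝ) (ha : 0 ≤ a) :
    μ {ω | a ≤ ∑ k ∈ s, D k ω} ≤ ENNReal.ofReal (Real.exp (-(a ^ 2) / (4 * s.card))) := by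
  rcases eq_or_lt_of_le ha with rfl | ha0
  · simpa using prob_le_one
  by_cases hcard : (s.card : ℝ) < a
  · have hempty : {ω | a ≤ ∑ k ∈ s, D k ω} = ∅ := by
      ext ω
      simp only [Set.mem_setOf_eq, Set.mem_empty_iff_false, iff_false, not_le]
      calc ∑ k ∈ s, D k ω ≤ ∑ _k ∈ s, (1:ℝ) :=
            Finset.sum_le_sum fun k _ => (abs_le.mp (hDb k ω)).2
        _ = s.card := by simp
        _ < a := hcard
    simp [hempty]
  push_neg at hcard
  have hc0 : (0:ℝ) < s.card := lt_of_lt_of_le ha0 hcard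
  set lam : ℝ := a / (2 * s.card) with hlam_def
  have hlam0 : 0 < lam := div_pos ha0 (by linarith)
  have hlam1 : lam ≤ 1 := by
    rw [hlam_def, div_le_one (by linarith)]
    linarith
  have hTmeas : Measurable fun ω => ∑ k ∈ s, D k ω :=
    Finset.measurable_sum s fun k _ => hDmeas k
  have hTle : ∀ ω, ∑ k ∈ s, D k ω ≤ s.card := fun ω => by
    calc ∑ k ∈ s, D k ω ≤ ∑ _k ∈ s, (1:ℝ) :=
          Finset.sum_le_sum fun k _ => (abs_le.mp (hDb k ω)).2
      _ = s.card := by simp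
  have hint : Integrable (fun ω => Real.exp (lam * ∑ k ∈ s, D k ω)) μ := by
    refine Integrable.mono' (integrable_const (Real.exp (lam * s.card)))
      ((hTmeas.const_mul lam).exp).aestronglyMeasurable ?_
    filter_upwards with ω
    rw [Real.norm_eq_abs, Real.abs_exp]
    exact Real.exp_le_exp.mpr (mul_le_mul_of_nonneg_left (hTle ω) hlam0.le)
  have key := measure_ge_le_exp_mul_mgf (μ := μ) (X := fun ω => ∑ k ∈ s, D k ω)
    a hlam0.le hint
  have hfun : (fun ω => ∑ k ∈ s, D k ω) = ∑ k ∈ s, D k := by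
    funext ω; simp
  have hmgf_sum : mgf (fun ω => ∑ k ∈ s, D k ω) μ lam = ∏ k ∈ s, mgf (D k) μ lam := by
    rw [hfun, hindep.mgf_sum hDmeas]
  have hprod : ∏ k ∈ s, mgf (D k) μ lam ≤ Real.exp (lam ^ 2) ^ s.card := by
    rw [← Finset.prod_const]
    exact Finset.prod_le_prod (fun k _ => mgf_nonneg)
      (fun k _ => hmgf k lam (by rw [abs_of_pos hlam0]; exact hlam1))
  have hexp_eq : Real.exp (-lam * a) * Real.exp (lam ^ 2) ^ s.card
      = Real.exp (-(a ^ 2) / (4 * s.card)) := by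
    rw [← Real.exp_nat_mul, ← Real.exp_add]
    congr 1
    rw [hlam_def]
    field_simp
    ring
  have hfinal : (μ {ω | a ≤ ∑ k ∈ s, D k ω}).toReal ≤ Real.exp (-(a ^ 2) / (4 * s.card)) := by
    calc (μ {ω | a ≤ ∑ k ∈ s, D k ω}).toReal
        ≤ Real.exp (-lam * a) * mgf (fun ω => ∑ k ∈ s, D k ω) μ lam := key
      _ ≤ Real.exp (-lam * a) * (Real.exp (lam ^ 2) ^ s.card) := by
          rw [hmgf_sum]
          exact mul_le_mul_of_nonneg_left hprod (Real.exp_pos _).le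
      _ = _ := hexp_eq
  rwa [ENNReal.le_ofReal_iff_toReal_le (measure_ne_top μ _) (Real.exp_nonneg _)]

lemma chernoff_two {Ω : Type*} [MeasurableSpace Ω] {μ : Measure Ω} [IsProbabilityMeasure μ]
    (D : ℕ → Ω → ℝ) (hDmeas : ∀ k, Measurable (D k))
    (hindep : iIndepFun D μ)
    (hDb : ∀ k ω, |D k ω| ≤ 1)
    (hmgf : ∀ k t, |t| ≤ 1 → mgf (D k) μ t ≤ Real.exp (t ^ 2))
    (s : Finset ℕ) (a : ℝ) (ha : 0 ≤ a) :
    μ {ω | a ≤ |∑ k ∈ s, D k ω|} ≤ ENNReal.ofReal (2 * Real.exp (-(a ^ 2) / (4 * s.card))) := by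
  set E : ℕ → Ω → ℝ := fun k ω => -(D k ω) with hE_def
  have hEmeas : ∀ k, Measurable (E k) := fun k => (hDmeas k).neg
  have hEindep : iIndepFun E μ :=
    hindep.comp (fun _ => fun x : ℝ => -x) (fun _ => measurable_neg)
  have hEb : ∀ k ω, |E k ω| ≤ 1 := fun k ω => by rw [hE_def]; simpa using hDb k ω
  have hEmgf : ∀ k t, |t| ≤ 1 → mgf (E k) μ t ≤ Real.exp (t ^ 2) := by
    intro k t ht
    have h1 : E k = -(D k) := by funext ω; simp [hE_def]
    rw [h1, mgf_neg]
    have := hmgf k (-t) (by simpa using ht)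
    simpa using this
  have hsub : {ω | a ≤ |∑ k ∈ s, D k ω|} ⊆
      {ω | a ≤ ∑ k ∈ s, D k ω} ∪ {ω | a ≤ ∑ k ∈ s, E k ω} := by
    intro ω hω
    simp only [Set.mem_setOf_eq] at hω
    rcases le_abs.mp hω with h | h
    · exact Or.inl h
    · refine Or.inr ?_
      have : ∑ k ∈ s, E k ω = -∑ k ∈ s, D k ω := by
        simp [hE_def]
      simp only [Set.mem_setOf_eq, this]
      exact h
  calc μ {ω | a ≤ |∑ k ∈ s, D k ω|}
      ≤ μ ({ω | a ≤ ∑ k ∈ s, D k ω} ∪ {ω | a ≤ ∑ k ∈ s, E k ω}) := measure_mono hsub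
    _ ≤ μ {ω | a ≤ ∑ k ∈ s, D k ω} + μ {ω | a ≤ ∑ k ∈ s, E k ω} := measure_union_le _ _
    _ ≤ ENNReal.ofReal (Real.exp (-(a ^ 2) / (4 * s.card)))
        + ENNReal.ofReal (Real.exp (-(a ^ 2) / (4 * s.card))) :=
        add_le_add (chernoff_one D hDmeas hindep hDb hmgf s a ha)
          (chernoff_one E hEmeas hEindep hEb hEmgf s a ha)
    _ = ENNReal.ofReal (2 * Real.exp (-(a ^ 2) / (4 * s.card))) := by
        rw [← ENNReal.ofReal_add (Real.exp_nonneg _) (Real.exp_nonneg _)]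
        ring_nf




set_option maxHeartbeats 1000000 in
lemma dev_block {Ω : Type*} [MeasurableSpace Ω] {μ : Measure Ω} [IsProbabilityMeasure μ]
    (D : ℕ → Ω → ℝ)
    (hch : ∀ (s : Finset ℕ) (a : ℝ), 0 ≤ a →
      μ {ω | a ≤ |∑ k ∈ s, D k ω|} ≤ ENNReal.ofReal (2 * Real.exp (-(a ^ 2) / (4 * s.card))))
    (c : ℝ) (hc : 0 < c) :
    ∀ᵐ ω ∂μ, ∀ᶠ n : ℕ in atTop,
      (∑ k ∈ Finset.range n, D k ω) ^ 2 ≤ c * n * Real.log n := by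
  set δ : ℝ := min (c / 64) (1 / 2) with hδdef
  have hδ0 : 0 < δ := lt_min (by positivity) (by norm_num)
  have hδc : δ ≤ c / 64 := min_le_left _ _
  have hδ1 : δ ≤ 1 / 2 := min_le_right _ _
  have h1δ : 1 < 1 + δ := by linarith
  set ν : ℕ → ℕ := fun k => ⌈(1 + δ) ^ k⌉₊ with hνdef
  have hpow_pos : ∀ k : ℕ, (0:ℝ) < (1 + δ) ^ k := fun k => by positivity
  have hpow_one : ∀ k : ℕ, (1:ℝ) ≤ (1 + δ) ^ k := fun k => one_le_pow₀ (by linarith)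
  have hν_lb : ∀ k, (1 + δ) ^ k ≤ (ν k : ℝ) := fun k => Nat.le_ceil _
  have hν_ub : ∀ k, (ν k : ℝ) ≤ (1 + δ) ^ k + 1 := fun k =>
    (Nat.ceil_lt_add_one (hpow_pos k).le).le
  have hν1 : ∀ k, 1 ≤ ν k := fun k => by
    have h : (1:ℝ) ≤ (ν k : ℝ) := le_trans (hpow_one k) (hν_lb k)
    exact_mod_cast h
  have hν_pos : ∀ k, (0:ℝ) < (ν k : ℝ) := fun k => by
    have := hν1 k; positivity
  have hlogν0 : ∀ k, 0 ≤ Real.log (ν k) := fun k =>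
    Real.log_nonneg (by exact_mod_cast hν1 k)
  have hν_mono : Monotone ν := fun i j hij =>
    Nat.ceil_le_ceil (pow_le_pow_right₀ (by linarith) hij)
  have hν_tend : Tendsto (fun k => ν k) atTop atTop :=
    tendsto_nat_ceil_atTop.comp (tendsto_pow_atTop_atTop_of_one_lt h1δ)
  obtain ⟨K₁, hK₁⟩ := eventually_atTop.mp
    ((tendsto_pow_atTop_atTop_of_one_lt h1δ).eventually_ge_atTop (2 / δ))
  -- block width
  set Δ : ℕ → ℕ := fun k => ν (k + 1) - ν k with hΔdef
  have hΔcast : ∀ k, ((Δ k : ℕ) : ℝ) = (ν (k+1) : ℝ) - (ν k : ℝ) := fun k => by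
    rw [hΔdef]
    push_cast [Nat.cast_sub (hν_mono (Nat.le_succ k))]
    ring
  have hδν2 : ∀ k ≥ K₁, (2:ℝ) ≤ δ * (1 + δ) ^ k := by
    intro k hk
    have h := hK₁ k hk
    have := (div_le_iff₀ hδ0).mp h
    linarith [this]
  have hΔle : ∀ k ≥ K₁, (Δ k : ℝ) ≤ 2 * δ * (ν k : ℝ) := by
    intro k hk
    rw [hΔcast k]
    have h1 := hν_ub (k+1)
    have h2 := hν_lb k
    have h3 : (1 + δ) ^ (k+1) = (1 + δ) ^ k * (1 + δ) := pow_succ _ _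
    have h4 := hδν2 k hk
    nlinarith [hpow_pos k]
  have hν4 : ∀ k ≥ K₁, (4:ℝ) ≤ (ν k : ℝ) := by
    intro k hk
    have h := hK₁ k hk
    have h2 : (4:ℝ) ≤ 2 / δ := by
      rw [le_div_iff₀ hδ0]; linarith
    linarith [hν_lb k]
  have hlogν_pos : ∀ k ≥ K₁, 0 < Real.log (ν k) := by
    intro k hk
    apply Real.log_pos
    linarith [hν4 k hk]
  -- deviation thresholds
  set a : ℕ → ℝ := fun k => Real.sqrt (c * (ν k : ℝ) * Real.log (ν k)) with hadef
  have ha0 : ∀ k, 0 ≤ a k := fun k => Real.sqrt_nonneg _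
  have ha_sq : ∀ k, (a k) ^ 2 = c * (ν k : ℝ) * Real.log (ν k) := fun k =>
    Real.sq_sqrt (mul_nonneg (mul_nonneg hc.le (hν_pos k).le) (hlogν0 k))
  -- events
  set E : ℕ → Set Ω := fun k =>
    {ω | a k / 2 ≤ |∑ i ∈ Finset.range (ν k), D i ω|} ∪
      ⋃ j ∈ Finset.Icc 1 (Δ k), {ω | a k / 2 ≤ |∑ i ∈ Finset.Ico (ν k) (ν k + j), D i ω|}
    with hEdef
  set r₁ : ℝ := Real.exp (-(c / 16) * Real.log (1 + δ)) with hr₁def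
  have hlog1δ : 0 < Real.log (1 + δ) := Real.log_pos h1δ
  have hr₁0 : 0 ≤ r₁ := (Real.exp_pos _).le
  have hr₁1 : r₁ < 1 := by
    rw [hr₁def, Real.exp_lt_one_iff]
    nlinarith
  set r₂ : ℝ := 1 / (1 + δ) with hr₂def
  have hr₂0 : 0 ≤ r₂ := by positivity
  have hr₂1 : r₂ < 1 := by rw [hr₂def, div_lt_one (by linarith)]; linarith
  have hinvν : ∀ k, ((ν k : ℝ))⁻¹ ≤ r₂ ^ k := by
    intro k
    rw [hr₂def, one_div, inv_pow]
    exact inv_anti₀ (hpow_pos k) (hν_lb k)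
  have hEbound : ∀ k, K₁ ≤ k → μ (E k) ≤ ENNReal.ofReal (2 * r₁ ^ k + 4 * δ * r₂ ^ k) := by
    intro k hk
    have hb1 : μ {ω | a k / 2 ≤ |∑ i ∈ Finset.range (ν k), D i ω|}
        ≤ ENNReal.ofReal (2 * r₁ ^ k) := by
      have h := hch (Finset.range (ν k)) (a k / 2) (by positivity)
      rw [Finset.card_range] at h
      refine h.trans (ENNReal.ofReal_le_ofReal ?_)
      have hA : (a k / 2) ^ 2 = c * (ν k : ℝ) * Real.log (ν k) / 4 := by
        rw [div_pow, ha_sq]; norm_num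
      have hlog_le : (k : ℝ) * Real.log (1 + δ) ≤ Real.log (ν k) := by
        rw [← Real.log_pow]
        exact Real.log_le_log (hpow_pos k) (hν_lb k)
      have hexp_le : -((a k / 2) ^ 2) / (4 * (ν k : ℝ))
          ≤ (k : ℝ) * (-(c / 16) * Real.log (1 + δ)) := by
        have hνne : (ν k : ℝ) ≠ 0 := (hν_pos k).ne'
        have heq : -((a k / 2) ^ 2) / (4 * (ν k : ℝ)) = -((c / 16) * Real.log (ν k)) := by
          rw [hA]; field_simp; ring
        rw [heq]
        nlinarith [hlogν0 k]
      have : Real.exp (-((a k / 2) ^ 2) / (4 * (ν k : ℝ))) ≤ r₁ ^ k := by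
        rw [hr₁def, ← Real.exp_nat_mul]
        exact Real.exp_le_exp.mpr hexp_le
      nlinarith [Real.exp_nonneg (-((a k / 2) ^ 2) / (4 * (ν k : ℝ)))]
    have hb2 : μ (⋃ j ∈ Finset.Icc 1 (Δ k),
        {ω | a k / 2 ≤ |∑ i ∈ Finset.Ico (ν k) (ν k + j), D i ω|})
        ≤ ENNReal.ofReal (4 * δ * r₂ ^ k) := by
      have hterm : ∀ j ∈ Finset.Icc 1 (Δ k),
          μ {ω | a k / 2 ≤ |∑ i ∈ Finset.Ico (ν k) (ν k + j), D i ω|}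
          ≤ ENNReal.ofReal (2 * Real.exp (-(2 * Real.log (ν k)))) := by
        intro j hj
        obtain ⟨hj1, hjΔ⟩ := Finset.mem_Icc.mp hj
        have h := hch (Finset.Ico (ν k) (ν k + j)) (a k / 2) (by positivity)
        rw [Nat.card_Ico, Nat.add_sub_cancel_left] at h
        refine h.trans (ENNReal.ofReal_le_ofReal ?_)
        have hA : (a k / 2) ^ 2 = c * (ν k : ℝ) * Real.log (ν k) / 4 := by
          rw [div_pow, ha_sq]; norm_num
        have hjr : (0:ℝ) < (j : ℝ) := by exact_mod_cast hj1
        have hjΔr : (j : ℝ) ≤ (Δ k : ℝ) := by exact_mod_cast hjΔ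
        have hΔc32 : (Δ k : ℝ) ≤ c / 32 * (ν k : ℝ) := by
          have := hΔle k hk
          nlinarith [hν_pos k]
        have hexp_le : -((a k / 2) ^ 2) / (4 * (j : ℝ)) ≤ -(2 * Real.log (ν k)) := by
          rw [hA, div_le_iff₀ (by positivity : (0:ℝ) < 4 * (j:ℝ))] at *
          nlinarith [hlogν0 k, hν_pos k]
        have := Real.exp_le_exp.mpr hexp_le
        linarith
      calc μ (⋃ j ∈ Finset.Icc 1 (Δ k),
            {ω | a k / 2 ≤ |∑ i ∈ Finset.Ico (ν k) (ν k + j), D i ω|})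
          ≤ ∑ j ∈ Finset.Icc 1 (Δ k),
            μ {ω | a k / 2 ≤ |∑ i ∈ Finset.Ico (ν k) (ν k + j), D i ω|} :=
            measure_biUnion_finset_le _ _
        _ ≤ ∑ _j ∈ Finset.Icc 1 (Δ k),
            ENNReal.ofReal (2 * Real.exp (-(2 * Real.log (ν k)))) :=
            Finset.sum_le_sum hterm
        _ = (Δ k) * ENNReal.ofReal (2 * Real.exp (-(2 * Real.log (ν k)))) := by
            rw [Finset.sum_const, Nat.card_Icc, Nat.add_sub_cancel, nsmul_eq_mul]
        _ = ENNReal.ofReal ((Δ k : ℝ) * (2 * Real.exp (-(2 * Real.log (ν k))))) := by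
            rw [← ENNReal.ofReal_natCast (Δ k), ← ENNReal.ofReal_mul (by positivity)]
        _ ≤ ENNReal.ofReal (4 * δ * r₂ ^ k) := by
            apply ENNReal.ofReal_le_ofReal
            have hexp2 : Real.exp (-(2 * Real.log (ν k))) = ((ν k : ℝ) * (ν k : ℝ))⁻¹ := by
              rw [two_mul, Real.exp_neg, Real.exp_add, Real.exp_log (hν_pos k)]
            rw [hexp2]
            have h1 : (Δ k : ℝ) ≤ 2 * δ * (ν k : ℝ) := hΔle k hk
            have h2 : ((ν k : ℝ))⁻¹ ≤ r₂ ^ k := hinvν k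
            have hνne : (ν k : ℝ) ≠ 0 := (hν_pos k).ne'
            have h3 : (Δ k : ℝ) * (2 * ((ν k : ℝ) * (ν k : ℝ))⁻¹)
                ≤ 4 * δ * ((ν k : ℝ))⁻¹ := by
              have hstep : (Δ k : ℝ) * (2 * ((ν k : ℝ) * (ν k : ℝ))⁻¹)
                  ≤ (2 * δ * (ν k : ℝ)) * (2 * ((ν k : ℝ) * (ν k : ℝ))⁻¹) :=
                mul_le_mul_of_nonneg_right h1 (by positivity)
              have heq : (2 * δ * (ν k : ℝ)) * (2 * ((ν k : ℝ) * (ν k : ℝ))⁻¹)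
                  = 4 * δ * ((ν k : ℝ))⁻¹ := by
                field_simp
                ring
              linarith [hstep, heq.le, heq.ge]
            refine h3.trans ?_
            exact mul_le_mul_of_nonneg_left h2 (by positivity)
    calc μ (E k) ≤ μ {ω | a k / 2 ≤ |∑ i ∈ Finset.range (ν k), D i ω|}
          + μ (⋃ j ∈ Finset.Icc 1 (Δ k),
            {ω | a k / 2 ≤ |∑ i ∈ Finset.Ico (ν k) (ν k + j), D i ω|}) := measure_union_le _ _
      _ ≤ ENNReal.ofReal (2 * r₁ ^ k) + ENNReal.ofReal (4 * δ * r₂ ^ k) := add_le_add hb1 hb2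
      _ = ENNReal.ofReal (2 * r₁ ^ k + 4 * δ * r₂ ^ k) := by
          rw [← ENNReal.ofReal_add (by positivity) (by positivity)]
  -- summability of the shifted sequence
  have hsummable : Summable (fun k => 2 * r₁ ^ (k + K₁) + 4 * δ * r₂ ^ (k + K₁)) := by
    apply Summable.add
    · exact (summable_nat_add_iff K₁).mpr ((summable_geometric_of_lt_one hr₁0 hr₁1).mul_left 2)
    · exact (summable_nat_add_iff K₁).mpr
        ((summable_geometric_of_lt_one hr₂0 hr₂1).mul_left (4 * δ))
  have hsumfin : (∑' k : ℕ, μ (E (k + K₁))) ≠ ⊤ := by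
    have hle : (∑' k : ℕ, μ (E (k + K₁)))
        ≤ ∑' k : ℕ, ENNReal.ofReal (2 * r₁ ^ (k + K₁) + 4 * δ * r₂ ^ (k + K₁)) :=
      ENNReal.tsum_le_tsum fun k => hEbound (k + K₁) (Nat.le_add_left _ _)
    rw [← ENNReal.ofReal_tsum_of_nonneg (fun k => by positivity) hsummable] at hle
    exact ne_top_of_le_ne_top ENNReal.ofReal_ne_top hle
  filter_upwards [MeasureTheory.ae_eventually_notMem hsumfin] with ω hω
  obtain ⟨m₀, hm₀⟩ := eventually_atTop.mp hω
  set k₀ : ℕ := m₀ + K₁ with hk₀def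
  have hk₀ : ∀ k, k₀ ≤ k → ω ∉ E k := by
    intro k hk
    have h1 : m₀ ≤ k - K₁ := by omega
    have := hm₀ (k - K₁) h1
    rwa [Nat.sub_add_cancel (by omega)] at this
  rw [eventually_atTop]
  refine ⟨ν k₀, fun n hn => ?_⟩
  obtain ⟨K, hK⟩ := eventually_atTop.mp (hν_tend.eventually_gt_atTop n)
  have hk₀K : k₀ < K := by
    by_contra h
    push_neg at h
    exact absurd hn (not_le.mpr (hK k₀ h))
  have hnge : ν k₀ ≤ n := hn
  set k : ℕ := Nat.findGreatest (fun m => ν m ≤ n) K with hkdef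
  have hk_ge : k₀ ≤ k := Nat.le_findGreatest (P := fun m => ν m ≤ n) hk₀K.le hnge
  have hνk : ν k ≤ n :=
    Nat.findGreatest_spec (P := fun m => ν m ≤ n) hk₀K.le hnge
  have hkleK : k ≤ K := Nat.findGreatest_le (P := fun m => ν m ≤ n) K
  have hkK : k < K := by
    rcases lt_or_eq_of_le hkleK with h | h
    · exact h
    · exfalso
      rw [h] at hνk
      exact absurd hνk (not_le.mpr (hK K le_rfl))
  have hnk1 : n < ν (k + 1) := by
    by_contra h
    push_neg at h
    exact Nat.findGreatest_is_greatest (P := fun m => ν m ≤ n)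
      (Nat.lt_succ_self k) (by omega) h
  have hkK₁ : K₁ ≤ k := by omega
  have hωk : ω ∉ E k := hk₀ k hk_ge
  rw [hEdef] at hωk
  simp only [Set.mem_union, not_or] at hωk
  obtain ⟨h1', h2'⟩ := hωk
  have h1 : |∑ i ∈ Finset.range (ν k), D i ω| < a k / 2 := by
    simpa [Set.mem_setOf_eq, not_le] using h1'
  have h2 : ∀ j, 1 ≤ j → j ≤ Δ k →
      |∑ i ∈ Finset.Ico (ν k) (ν k + j), D i ω| < a k / 2 := by
    intro j hj1 hj2
    by_contra hcon
    push_neg at hcon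
    exact h2' (Set.mem_iUnion₂.mpr ⟨j, Finset.mem_Icc.mpr ⟨hj1, hj2⟩, hcon⟩)
  have hak_pos : 0 < a k := by
    rw [hadef]
    apply Real.sqrt_pos.mpr
    have := hlogν_pos k hkK₁
    have := hν_pos k
    positivity
  -- split the sum
  set j : ℕ := n - ν k with hjdef
  have hjn : ν k + j = n := by omega
  have hjΔ : j ≤ Δ k := by
    have hmono := hν_mono (Nat.le_succ k)
    have hΔk : Δ k = ν (k + 1) - ν k := by simp only [hΔdef]
    omega
  have hsplit : ∑ i ∈ Finset.range n, D i ω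
      = ∑ i ∈ Finset.range (ν k), D i ω + ∑ i ∈ Finset.Ico (ν k) n, D i ω := by
    rw [Finset.range_eq_Ico, Finset.range_eq_Ico]
    exact (Finset.sum_Ico_consecutive _ (Nat.zero_le _) hνk).symm
  have habs2 : |∑ i ∈ Finset.Ico (ν k) n, D i ω| < a k / 2 := by
    rcases Nat.eq_zero_or_pos j with hj0 | hjpos
    · have hveq : ν k = n := by omega
      rw [← hveq, Finset.Ico_self, Finset.sum_empty, abs_zero]
      linarith
    · have := h2 j hjpos hjΔ
      rwa [hjn] at this
  have habs : |∑ i ∈ Finset.range n, D i ω| < a k := by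
    rw [hsplit]
    calc |∑ i ∈ Finset.range (ν k), D i ω + ∑ i ∈ Finset.Ico (ν k) n, D i ω|
        ≤ |∑ i ∈ Finset.range (ν k), D i ω| + |∑ i ∈ Finset.Ico (ν k) n, D i ω| := abs_add_le _ _
      _ < a k / 2 + a k / 2 := add_lt_add h1 habs2
      _ = a k := by ring
  have hsq : (∑ i ∈ Finset.range n, D i ω) ^ 2 ≤ (a k) ^ 2 := by
    have h := abs_lt.mp habs
    nlinarith [h.1, h.2]
  refine hsq.trans ?_
  rw [ha_sq]
  have hνn : (ν k : ℝ) ≤ (n : ℝ) := by exact_mod_cast hνk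
  have hlog_le : Real.log (ν k) ≤ Real.log (n : ℝ) := Real.log_le_log (hν_pos k) hνn
  have hlogn0 : 0 ≤ Real.log (n : ℝ) := le_trans (hlogν0 k) hlog_le
  have s1 : c * (ν k : ℝ) * Real.log (ν k) ≤ c * (ν k : ℝ) * Real.log (n : ℝ) :=
    mul_le_mul_of_nonneg_left hlog_le (by positivity)
  have s2 : c * (ν k : ℝ) * Real.log (n : ℝ) ≤ c * (n : ℝ) * Real.log (n : ℝ) := by
    apply mul_le_mul_of_nonneg_right _ hlogn0
    nlinarith
  linarith


set_option maxHeartbeats 1600000 in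
/-- **Lemma 1.**  For any block `I = (l+1):r` and any `α > 0`, the Kullback–Leibler
divergence between the empirical distribution `P̂_n` on `A^I` and the marginal `P`
satisfies `D(P̂_n ‖ P) < α log n / n` eventually almost surely as `n → ∞`. -/
theorem kl_empirical_marginal
    {N : ℕ} {A : Fin N → Type*} [∀ i, Fintype (A i)] [∀ i, Nonempty (A i)]
    [∀ i, MeasurableSpace (A i)] [∀ i, MeasurableSingletonClass (A i)]
    {Ω : Type*} [MeasurableSpace Ω] (μ : Measure Ω) [IsProbabilityMeasure μ]
    (P : Measure (Config A)) [IsProbabilityMeasure P]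
    (X : ℕ → Ω → Config A)
    (hmeas : ∀ k, Measurable (X k))
    (hlaw : ∀ k, Measure.map (X k) μ = P)
    (hindep : iIndepFun X μ)
    (l r : ℕ) (hlr : l < r) (hrN : r ≤ N)
    (α : ℝ) (hα : 0 < α) :
    ∀ᵐ ω ∂μ, ∃ n₀ : ℕ, ∀ n ≥ n₀,
      KL (fun b : Str A (block N l r) => (count X (block N l r) b n ω : ℝ) / n)
        (fun b => marg P (block N l r) b) < α * Real.log n / n := by
  classical
  set I : Finset (Fin N) := block N l r with hI
  -- measurability of cylinder sets
  have hcyl_meas : ∀ b : Str A I, MeasurableSet (cyl I b) := by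
    intro b
    have hrepr : cyl I b
        = ⋂ i : {j : Fin N // j ∈ I}, (fun x : Config A => x i.1) ⁻¹' {b i} := by
      ext x; simp [cyl]
    rw [hrepr]
    exact MeasurableSet.iInter fun i => (measurable_pi_apply i.1) (measurableSet_singleton _)
  set p : Str A I → ℝ := fun b => marg P I b with hp
  have hp_eq : ∀ b, p b = (P (cyl I b)).toReal := fun b => rfl
  have hp0 : ∀ b, 0 ≤ p b := fun b => ENNReal.toReal_nonneg
  have hp1 : ∀ b, p b ≤ 1 := by
    intro b
    rw [hp_eq]
    calc (P (cyl I b)).toReal ≤ (1 : ENNReal).toReal :=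
          ENNReal.toReal_mono ENNReal.one_ne_top prob_le_one
      _ = 1 := by simp
  -- the cylinders partition the configuration space
  have hUnion : ⋃ b ∈ (Finset.univ : Finset (Str A I)), cyl I b = Set.univ := by
    ext x
    simp only [Set.mem_iUnion, Set.mem_univ, iff_true, Finset.mem_univ, exists_true_left]
    exact ⟨fun i => x i.1, fun i => rfl⟩
  have hdisj : (↑(Finset.univ : Finset (Str A I)) : Set (Str A I)).PairwiseDisjoint
      (fun b => cyl I b) := by
    intro b _ b' _ hbb'
    rw [Function.onFun, Set.disjoint_left]
    intro x hxb hxb'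
    apply hbb'
    funext i
    rw [← hxb i, ← hxb' i]
  have hPsum : ∑ b : Str A I, P (cyl I b) = 1 := by
    rw [← measure_biUnion_finset hdisj (fun b _ => hcyl_meas b), hUnion, measure_univ]
  have hp_sum : ∑ b : Str A I, p b = 1 := by
    have h := congrArg ENNReal.toReal hPsum
    rwa [ENNReal.toReal_sum (fun b _ => measure_ne_top P _), ENNReal.toReal_one] at h
  -- indicator variables
  set g : Str A I → Config A → ℝ :=
    fun b x => (if x ∈ cyl I b then (1:ℝ) else 0) - p b with hg
  have hgmeas : ∀ b, Measurable (g b) := fun b =>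
    ((measurable_const.ite (hcyl_meas b) measurable_const).sub measurable_const)
  set D : Str A I → ℕ → Ω → ℝ := fun b k ω => g b (X k ω) with hD
  have hDmeas : ∀ b k, Measurable (D b k) := fun b k => (hgmeas b).comp (hmeas k)
  have hDindep : ∀ b, iIndepFun (D b) μ := fun b =>
    hindep.comp (fun _ => g b) (fun _ => hgmeas b)
  have hDb : ∀ b k ω, |D b k ω| ≤ 1 := by
    intro b k ω
    have h0 := hp0 b
    have h1 := hp1 b
    simp only [hD, hg]
    split_ifs <;> rw [abs_le] <;> constructor <;> linarith
  -- count as a sum of indicators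
  have hcount : ∀ (b : Str A I) (n : ℕ) (ω : Ω), (count X I b n ω : ℝ)
      = ∑ k ∈ Finset.range n, (if X k ω ∈ cyl I b then (1:ℝ) else 0) := by
    intro b n ω
    rw [count, Finset.card_filter, Nat.cast_sum]
    apply Finset.sum_congr rfl
    intro k _
    rw [Nat.cast_ite, Nat.cast_one, Nat.cast_zero]
    exact if_congr (by simp [cyl, Set.mem_setOf_eq]) rfl rfl
  have hsumD : ∀ (b : Str A I) (n : ℕ) (ω : Ω),
      ∑ k ∈ Finset.range n, D b k ω = (count X I b n ω : ℝ) - n * p b := by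
    intro b n ω
    simp only [hD, hg]
    rw [Finset.sum_sub_distrib, ← hcount b n ω]
    simp [mul_comm]
  -- total count
  have hcount_sum : ∀ (n : ℕ) (ω : Ω), ∑ b : Str A I, (count X I b n ω : ℝ) = n := by
    intro n ω
    have hfib := Finset.card_eq_sum_card_fiberwise
      (f := fun k => (fun i : {j : Fin N // j ∈ I} => X k ω i.1))
      (s := Finset.range n) (t := Finset.univ) (fun k _ => Finset.mem_univ _)
    rw [Finset.card_range] at hfib
    have hrw : ∀ b : Str A I,
        (Finset.filter (fun k => (fun i : {j : Fin N // j ∈ I} => X k ω i.1) = b)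
          (Finset.range n)).card = count X I b n ω := by
      intro b
      rw [count]
      congr 1
      apply Finset.filter_congr
      intro k _
      simp [funext_iff]
    have : (n : ℝ) = ∑ b : Str A I, ((Finset.filter
        (fun k => (fun i : {j : Fin N // j ∈ I} => X k ω i.1) = b)
        (Finset.range n)).card : ℝ) := by
      exact_mod_cast congrArg (Nat.cast : ℕ → ℝ) hfib
    rw [this]
    apply Finset.sum_congr rfl
    intro b _
    rw [hrw b]
  -- law of the indicators
  have hlawP : ∀ k (s : Set (Config A)), MeasurableSet s → μ (X k ⁻¹' s) = P s := by
    intro k s hs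
    rw [← hlaw k, Measure.map_apply (hmeas k) hs]
  -- mgf bound
  have hmgf : ∀ b k t, |t| ≤ 1 → mgf (D b k) μ t ≤ Real.exp (t ^ 2) := by
    intro b k t ht
    have hmap : mgf (D b k) μ t = ∫ x, Real.exp (t * g b x) ∂P := by
      rw [mgf, ← hlaw k]
      exact (integral_map (hmeas k).aemeasurable
        (((hgmeas b).const_mul t).exp.aestronglyMeasurable)).symm
    have hint_eq : ∫ x, Real.exp (t * g b x) ∂P
        = Real.exp (-(t * p b)) * (1 - p b + p b * Real.exp t) := by
      have hsplit : (fun x => Real.exp (t * g b x))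
          = fun x => (cyl I b).indicator
              (fun _ => Real.exp (t * (1 - p b)) - Real.exp (t * (0 - p b))) x
            + Real.exp (t * (0 - p b)) := by
        funext x
        simp only [hg, Set.indicator]
        split_ifs with h <;> ring_nf
      rw [hsplit, integral_add ((integrable_const _).indicator (hcyl_meas b))
        (integrable_const _), integral_indicator_const _ (hcyl_meas b), integral_const]
      simp only [measureReal_def, measure_univ, ENNReal.toReal_one, one_smul, smul_eq_mul]
      rw [← hp_eq b]
      have he1 : Real.exp (t * (1 - p b)) = Real.exp t * Real.exp (-(t * p b)) := by
        rw [← Real.exp_add]; ring_nf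
      have he2 : Real.exp (t * (0 - p b)) = Real.exp (-(t * p b)) := by ring_nf
      rw [he1, he2]
      ring
    rw [hmap, hint_eq]
    exact bernoulli_mgf_le (hp0 b) (hp1 b) ht
  have hch : ∀ (b : Str A I) (s : Finset ℕ) (a : ℝ), 0 ≤ a →
      μ {ω | a ≤ |∑ k ∈ s, D b k ω|}
        ≤ ENNReal.ofReal (2 * Real.exp (-(a ^ 2) / (4 * s.card))) :=
    fun b => chernoff_two (D b) (hDmeas b) (hDindep b) (hDb b) (hmgf b)
  -- constants
  set m : ℕ := Fintype.card (Str A I) with hm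
  have hm0 : 0 < m := Fintype.card_pos
  have hmr : (0:ℝ) < m := by exact_mod_cast hm0
  -- almost sure events
  have hae1 : ∀ᵐ ω ∂μ, ∀ b : Str A I, p b = 0 → ∀ k, X k ω ∉ cyl I b := by
    rw [ae_all_iff]
    intro b
    by_cases hpb : p b = 0
    · have hP0 : P (cyl I b) = 0 := by
        have := hp_eq b
        rw [hpb] at this
        rcases (ENNReal.toReal_eq_zero_iff _).mp this.symm with h | h
        · exact h
        · exact absurd h (measure_ne_top P _)
      have hk : ∀ᵐ ω ∂μ, ∀ k : ℕ, X k ω ∉ cyl I b := by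
        rw [ae_all_iff]
        intro k
        have hnull : μ (X k ⁻¹' cyl I b) = 0 := by rw [hlawP k _ (hcyl_meas b), hP0]
        filter_upwards [measure_eq_zero_iff_ae_notMem.mp hnull] with ω hω using hω
      filter_upwards [hk] with ω hω using fun _ => hω
    · filter_upwards with ω
      exact fun h => absurd h hpb
  have hae2 : ∀ᵐ ω ∂μ, ∀ b : Str A I, 0 < p b →
      ∀ᶠ n : ℕ in atTop, (∑ k ∈ Finset.range n, D b k ω) ^ 2
        ≤ (α * p b / (2 * m)) * n * Real.log n := by
    rw [ae_all_iff]
    intro b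
    by_cases hpb : 0 < p b
    · have hcb : 0 < α * p b / (2 * m) := by positivity
      filter_upwards [dev_block (D b) (hch b) _ hcb] with ω hω
      exact fun _ => hω
    · filter_upwards with ω
      exact fun h => absurd h hpb
  filter_upwards [hae1, hae2] with ω h1 h2
  -- extract a uniform threshold
  have hev : ∀ᶠ n : ℕ in atTop, 2 ≤ n ∧ ∀ b : Str A I, 0 < p b →
      (∑ k ∈ Finset.range n, D b k ω) ^ 2 ≤ (α * p b / (2 * m)) * n * Real.log n := by
    refine (eventually_ge_atTop 2).and ?_
    rw [eventually_all]
    intro b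
    by_cases hpb : 0 < p b
    · exact (h2 b hpb).mono fun n hn => fun _ => hn
    · filter_upwards with n
      exact fun h => absurd h hpb
  obtain ⟨n₀, hn₀⟩ := eventually_atTop.mp hev
  refine ⟨n₀, fun n hn => ?_⟩
  obtain ⟨hn2, hdev⟩ := hn₀ n hn
  -- deterministic end-game
  have hn0 : (0:ℝ) < n := by
    have : (2:ℝ) ≤ n := by exact_mod_cast hn2
    linarith
  have hlogn : 0 < Real.log n := Real.log_pos (by exact_mod_cast hn2)
  set x : Str A I → ℝ := fun b => (count X I b n ω : ℝ) / n with hx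
  have hx0 : ∀ b, 0 ≤ x b := fun b => by positivity
  have hxzero : ∀ b, p b = 0 → x b = 0 := by
    intro b hpb
    have hc0 : count X I b n ω = 0 := by
      rw [count, Finset.card_eq_zero, Finset.filter_eq_empty_iff]
      intro k _
      exact fun hcon => h1 b hpb k hcon
    rw [hx]
    simp [hc0]
  have hxdev : ∀ b, 0 < p b → (x b - p b) ^ 2 ≤ (α * p b / (2 * m)) * Real.log n / n := by
    intro b hpb
    have hd := hdev b hpb
    rw [hsumD b n ω] at hd
    have hxe : x b - p b = ((count X I b n ω : ℝ) - n * p b) / n := by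
      rw [hx]; field_simp
    rw [hxe, div_pow, div_le_div_iff₀ (by positivity) hn0]
    calc ((count X I b n ω : ℝ) - n * p b) ^ 2 * n
        ≤ ((α * p b / (2 * m)) * n * Real.log n) * n :=
          mul_le_mul_of_nonneg_right hd hn0.le
      _ = (α * p b / (2 * m)) * Real.log n * n ^ 2 := by ring
  -- the KL sum
  have hterm : ∀ b : Str A I,
      (if 0 < x b then x b * Real.log (x b / p b) else 0)
        ≤ (if 0 < p b then (x b - p b) ^ 2 / p b + (x b - p b) else 0) := by
    intro b
    by_cases hpb : 0 < p b
    · rw [if_pos hpb]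
      by_cases hxb : 0 < x b
      · rw [if_pos hxb]
        have hlog : Real.log (x b / p b) ≤ x b / p b - 1 :=
          Real.log_le_sub_one_of_pos (by positivity)
        have hmul : x b * Real.log (x b / p b) ≤ x b * (x b / p b - 1) :=
          mul_le_mul_of_nonneg_left hlog (hx0 b)
        have hid : x b * (x b / p b - 1) = (x b - p b) ^ 2 / p b + (x b - p b) := by
          field_simp
          ring
        linarith
      · rw [if_neg hxb]
        have hxb0 : x b = 0 := le_antisymm (not_lt.mp hxb) (hx0 b)
        rw [hxb0]
        have h00 : (0 - p b) ^ 2 / p b + (0 - p b) = 0 := by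
          rw [show (0 - p b) ^ 2 = p b * p b by ring, mul_div_assoc, div_self hpb.ne']
          ring
        linarith
    · rw [if_neg hpb]
      have hpb0 : p b = 0 := le_antisymm (not_lt.mp hpb) (hp0 b)
      rw [hxzero b hpb0]
      simp
  have hKL : KL x p ≤ ∑ b : Str A I,
      (if 0 < p b then (x b - p b) ^ 2 / p b + (x b - p b) else 0) := by
    rw [KL]
    exact Finset.sum_le_sum fun b _ => hterm b
  -- split the sum over the support
  set supp : Finset (Str A I) := Finset.univ.filter (fun b => 0 < p b) with hsupp
  have hsum_split : ∑ b : Str A I,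
      (if 0 < p b then (x b - p b) ^ 2 / p b + (x b - p b) else 0)
      = ∑ b ∈ supp, ((x b - p b) ^ 2 / p b + (x b - p b)) := by
    rw [hsupp, Finset.sum_filter]
  have hx_supp : ∑ b ∈ supp, x b = 1 := by
    have htot : ∑ b : Str A I, x b = 1 := by
      rw [hx, ← Finset.sum_div, hcount_sum n ω, div_self hn0.ne']
    rw [← htot]
    apply Finset.sum_subset (Finset.subset_univ _)
    intro b _ hb
    rw [hsupp, Finset.mem_filter] at hb
    push_neg at hb
    exact hxzero b (le_antisymm (hb (Finset.mem_univ b)) (hp0 b))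
  have hp_supp : ∑ b ∈ supp, p b = 1 := by
    rw [← hp_sum]
    apply Finset.sum_subset (Finset.subset_univ _)
    intro b _ hb
    rw [hsupp, Finset.mem_filter] at hb
    push_neg at hb
    exact le_antisymm (hb (Finset.mem_univ b)) (hp0 b)
  have hquad : ∑ b ∈ supp, (x b - p b) ^ 2 / p b ≤ (α / 2) * (Real.log n / n) := by
    have hle : ∀ b ∈ supp, (x b - p b) ^ 2 / p b ≤ (α / (2 * m)) * (Real.log n / n) := by
      intro b hb
      rw [hsupp, Finset.mem_filter] at hb
      have hpb := hb.2
      have hd := hxdev b hpb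
      rw [div_le_iff₀ hpb]
      calc (x b - p b) ^ 2 ≤ (α * p b / (2 * m)) * Real.log n / n := hd
        _ = α / (2 * m) * (Real.log n / n) * p b := by ring
    calc ∑ b ∈ supp, (x b - p b) ^ 2 / p b
        ≤ ∑ _b ∈ supp, (α / (2 * m)) * (Real.log n / n) := Finset.sum_le_sum hle
      _ = supp.card * ((α / (2 * m)) * (Real.log n / n)) := by
          rw [Finset.sum_const, nsmul_eq_mul]
      _ ≤ m * ((α / (2 * m)) * (Real.log n / n)) := by
          have hcard : (supp.card : ℝ) ≤ m := by
            rw [hm]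
            exact_mod_cast (Finset.card_filter_le _ _).trans (le_of_eq (Finset.card_univ))
          apply mul_le_mul_of_nonneg_right hcard (by positivity)
      _ = (α / 2) * (Real.log n / n) := by field_simp
  have hlin : ∑ b ∈ supp, (x b - p b) = 0 := by
    rw [Finset.sum_sub_distrib, hx_supp, hp_supp, sub_self]
  have hfinal : KL x p ≤ (α / 2) * (Real.log n / n) := by
    calc KL x p ≤ ∑ b ∈ supp, ((x b - p b) ^ 2 / p b + (x b - p b)) := by
          rw [← hsum_split]; exact hKL
      _ = ∑ b ∈ supp, (x b - p b) ^ 2 / p b + ∑ b ∈ supp, (x b - p b) :=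
          Finset.sum_add_distrib
      _ = ∑ b ∈ supp, (x b - p b) ^ 2 / p b := by rw [hlin, add_zero]
      _ ≤ (α / 2) * (Real.log n / n) := hquad
  have hgoal : KL x p < α * Real.log n / n := by
    have hpos : 0 < Real.log n / n := by positivity
    calc KL x p ≤ (α / 2) * (Real.log n / n) := hfinal
      _ < α * (Real.log n / n) := by nlinarith
      _ = α * Real.log n / n := by ring
  exact hgoal

end MultiSeg
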